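/- Let N ≥ 2, let p, q be coprime positive integers such that N divides none of the numbers 2p, 2q, q − p, q + p, and let x₀, y₀, φₓ, φ_y be reals. For the Type I formation x_k(τ) = x₀ sin(2πp(τ + k/N) + φₓ), y_k(τ) = y₀ sin(2πq(τ + k/N) + φ_y), k = 1, …, N, the following hold identically in τ ∈ ℝ: ∑_{k=1}^N x_k'(τ)·x_k(τ) = 0, ∑_{k=1}^N y_k'(τ)·y_k(τ) = 0, and ∑_{k=1}^N x_k'(τ)·y_k(τ) = 0, where ' denotes the derivative with respect to τ. -/

import Mathlib

open Real Finset

private lemma sin_sum_zero (N : ℕ) (hN : 0 < N) (m : ℤ) (hm : ¬ ((N : ℤ) ∣ m)) (c : ℝ) :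
    ∑ k ∈ Finset.Icc 1 N, Real.sin (2 * π * (m : ℝ) * (k : ℝ) / (N : ℝ) + c) = 0 := by
  have hNc : (N : ℂ) ≠ 0 := Nat.cast_ne_zero.mpr hN.ne'
  have hπ : (π : ℂ) ≠ 0 := by exact_mod_cast Real.pi_ne_zero
  set ζ : ℂ := Complex.exp (2 * π * m / N * Complex.I) with hζdef
  have hζN : ζ ^ N = 1 := by
    rw [hζdef, ← Complex.exp_nat_mul]
    have : (N : ℂ) * (2 * π * m / N * Complex.I) = (m : ℂ) * (2 * π * Complex.I) := by
      field_simp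
    rw [this, Complex.exp_int_mul_two_pi_mul_I]
  have hζ1 : ζ ≠ 1 := by
    intro h
    rw [hζdef, Complex.exp_eq_one_iff] at h
    obtain ⟨n, hn⟩ := h
    apply hm
    refine ⟨n, ?_⟩
    have hI : Complex.I ≠ 0 := Complex.I_ne_zero
    have h2 : (m : ℂ) = (N : ℂ) * n := by
      field_simp at hn
      have h3 : (((m : ℂ) - (N : ℂ) * n)) * (2 * π * Complex.I) = 0 := by
        linear_combination (2 * π * Complex.I) * hn
      have hne : (2 * (π : ℂ) * Complex.I) ≠ 0 := by
        simp [hπ, Complex.I_ne_zero]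
      rcases mul_eq_zero.mp h3 with h | h
      · linear_combination h
      · exact absurd h hne
    exact_mod_cast h2
  -- complex exponential sum over Icc 1 N vanishes
  have hins : insert 0 (Finset.Icc 1 N) = Finset.range (N + 1) := by
    ext k; simp [Nat.lt_succ_iff]; omega
  have h0 : (0 : ℕ) ∉ Finset.Icc 1 N := by simp
  have hgeom : ∑ k ∈ Finset.range (N + 1), ζ ^ k = 1 := by
    rw [geom_sum_eq hζ1]
    have : ζ ^ (N + 1) = ζ := by rw [pow_succ, hζN, one_mul]
    rw [this]
    exact div_self (sub_ne_zero.mpr hζ1)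
  have hsumζ : ∑ k ∈ Finset.Icc 1 N, ζ ^ k = 0 := by
    have hins' := Finset.sum_insert (f := fun k => ζ ^ k) h0
    simp only [hins, hgeom, pow_zero] at hins'
    linear_combination -hins' 
  have hexp : ∑ k ∈ Finset.Icc 1 N,
      Complex.exp (((2 * π * (m : ℝ) * (k : ℝ) / (N : ℝ) + c : ℝ)) * Complex.I) = 0 := by
    have : ∀ k ∈ Finset.Icc 1 N,
        Complex.exp (((2 * π * (m : ℝ) * (k : ℝ) / (N : ℝ) + c : ℝ)) * Complex.I)
          = Complex.exp ((c : ℝ) * Complex.I) * ζ ^ k := by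
      intro k _
      rw [hζdef, ← Complex.exp_nat_mul, ← Complex.exp_add]
      congr 1
      push_cast
      field_simp
      ring
    rw [Finset.sum_congr rfl this, ← Finset.mul_sum, hsumζ, mul_zero]
  have him : ∀ k : ℕ, Real.sin (2 * π * (m : ℝ) * (k : ℝ) / (N : ℝ) + c)
      = (Complex.exp (((2 * π * (m : ℝ) * (k : ℝ) / (N : ℝ) + c : ℝ)) * Complex.I)).im :=
    fun k => (Complex.exp_ofReal_mul_I_im _).symm
  calc ∑ k ∈ Finset.Icc 1 N, Real.sin (2 * π * (m : ℝ) * (k : ℝ) / (N : ℝ) + c)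
      = (∑ k ∈ Finset.Icc 1 N,
          Complex.exp (((2 * π * (m : ℝ) * (k : ℝ) / (N : ℝ) + c : ℝ)) * Complex.I)).im := by
        rw [Complex.im_sum]; exact Finset.sum_congr rfl fun k _ => him k
    _ = 0 := by rw [hexp]; rfl

private lemma deriv_amp_sin (x₀ a b c τ : ℝ) :
    deriv (fun t : ℝ => x₀ * Real.sin (a * (t + c) + b)) τ
      = x₀ * (Real.cos (a * (τ + c) + b) * a) := by
  have h1 : HasDerivAt (fun t : ℝ => a * (t + c) + b) a τ := by
    simpa using (((hasDerivAt_id τ).add_const c).const_mul a).add_const b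
  exact (((Real.hasDerivAt_sin _).comp τ h1).const_mul x₀).deriv

/-- For a Type I formation of `N ≥ 2` deputy satellites with coprime positive
frequencies `p, q` such that `N` divides none of `2p`, `2q`, `q - p`, `q + p`,
the quadratic sums `∑ xₖ'xₖ`, `∑ yₖ'yₖ`, `∑ xₖ'yₖ` vanish identically, so the
second-order corrections to the main satellite's motion cancel. -/
theorem typeI_second_order_cancellation (N p q : ℕ) (hN : 2 ≤ N)
    (hp : 0 < p) (hq : 0 < q) (hpq : Nat.Coprime p q)
    (h2p : ¬ (N ∣ 2 * p)) (h2q : ¬ (N ∣ 2 * q))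
    (hqp : ¬ ((N : ℤ) ∣ ((q : ℤ) - (p : ℤ)))) (hqp' : ¬ (N ∣ (q + p)))
    (x₀ y₀ φx φy : ℝ) :
    ∀ τ : ℝ,
      (∑ k ∈ Finset.Icc 1 N,
        deriv (fun t : ℝ => x₀ * Real.sin (2 * π * p * (t + (k : ℝ) / N) + φx)) τ *
          (x₀ * Real.sin (2 * π * p * (τ + (k : ℝ) / N) + φx)) = 0) ∧
      (∑ k ∈ Finset.Icc 1 N,
        deriv (fun t : ℝ => y₀ * Real.sin (2 * π * q * (t + (k : ℝ) / N) + φy)) τ *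
          (y₀ * Real.sin (2 * π * q * (τ + (k : ℝ) / N) + φy)) = 0) ∧
      (∑ k ∈ Finset.Icc 1 N,
        deriv (fun t : ℝ => x₀ * Real.sin (2 * π * p * (t + (k : ℝ) / N) + φx)) τ *
          (y₀ * Real.sin (2 * π * q * (τ + (k : ℝ) / N) + φy)) = 0) := by
  intro τ
  have hN0 : 0 < N := lt_of_lt_of_le two_pos hN
  have hNr : (0:ℝ) < N := by exact_mod_cast hN0
  have h2pZ : ¬ ((N : ℤ) ∣ ((2 * p : ℕ) : ℤ)) := by
    rw [Int.natCast_dvd_natCast]; exact h2p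
  have h2qZ : ¬ ((N : ℤ) ∣ ((2 * q : ℕ) : ℤ)) := by
    rw [Int.natCast_dvd_natCast]; exact h2q
  have hpqZ : ¬ ((N : ℤ) ∣ ((p : ℤ) + q)) := by
    intro h; apply hqp'
    rw [← Int.natCast_dvd_natCast]
    push_cast
    rwa [add_comm] at h
  have hpmqZ : ¬ ((N : ℤ) ∣ ((p : ℤ) - q)) := by
    intro h; apply hqp
    rw [show (q : ℤ) - p = -((p:ℤ) - q) by ring]
    exact dvd_neg.mpr h
  refine ⟨?_, ?_, ?_⟩
  · -- ∑ xₖ' xₖ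
    have key := sin_sum_zero N hN0 ((2 * p : ℕ) : ℤ) h2pZ (2 * (2 * π * p * τ) + 2 * φx)
    calc ∑ k ∈ Finset.Icc 1 N,
          deriv (fun t : ℝ => x₀ * Real.sin (2 * π * p * (t + (k : ℝ) / N) + φx)) τ *
            (x₀ * Real.sin (2 * π * p * (τ + (k : ℝ) / N) + φx))
        = ∑ k ∈ Finset.Icc 1 N, (x₀ ^ 2 * (2 * π * p) / 2) *
            Real.sin (2 * π * (((2 * p : ℕ) : ℤ) : ℝ) * (k : ℝ) / (N : ℝ)
              + (2 * (2 * π * p * τ) + 2 * φx)) := by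
          refine Finset.sum_congr rfl fun k _ => ?_
          rw [deriv_amp_sin]
          have harg : 2 * π * (((2 * p : ℕ) : ℤ) : ℝ) * (k : ℝ) / (N : ℝ)
              + (2 * (2 * π * p * τ) + 2 * φx)
              = 2 * (2 * π * p * (τ + (k : ℝ) / N) + φx) := by
            push_cast; field_simp; ring
          rw [harg, Real.sin_two_mul]; ring
      _ = 0 := by rw [← Finset.mul_sum, key, mul_zero]
  · -- ∑ yₖ' yₖ
    have key := sin_sum_zero N hN0 ((2 * q : ℕ) : ℤ) h2qZ (2 * (2 * π * q * τ) + 2 * φy)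
    calc ∑ k ∈ Finset.Icc 1 N,
          deriv (fun t : ℝ => y₀ * Real.sin (2 * π * q * (t + (k : ℝ) / N) + φy)) τ *
            (y₀ * Real.sin (2 * π * q * (τ + (k : ℝ) / N) + φy))
        = ∑ k ∈ Finset.Icc 1 N, (y₀ ^ 2 * (2 * π * q) / 2) *
            Real.sin (2 * π * (((2 * q : ℕ) : ℤ) : ℝ) * (k : ℝ) / (N : ℝ)
              + (2 * (2 * π * q * τ) + 2 * φy)) := by
          refine Finset.sum_congr rfl fun k _ => ?_
          rw [deriv_amp_sin]
          have harg : 2 * π * (((2 * q : ℕ) : ℤ) : ℝ) * (k : ℝ) / (N : ℝ)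
              + (2 * (2 * π * q * τ) + 2 * φy)
              = 2 * (2 * π * q * (τ + (k : ℝ) / N) + φy) := by
            push_cast; field_simp; ring
          rw [harg, Real.sin_two_mul]; ring
      _ = 0 := by rw [← Finset.mul_sum, key, mul_zero]
  · -- ∑ xₖ' yₖ
    have lem : ∀ A B : ℝ, x₀ * (Real.cos A * (2 * π * p)) * (y₀ * Real.sin B)
        = (x₀ * y₀ * (2 * π * p) / 2) * Real.sin (A + B)
          - (x₀ * y₀ * (2 * π * p) / 2) * Real.sin (A - B) := by
      intro A B
      rw [Real.sin_add, Real.sin_sub]; ring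
    have key1 := sin_sum_zero N hN0 ((p : ℤ) + q) hpqZ
      (2 * π * ((p : ℝ) + (q : ℝ)) * τ + (φx + φy))
    have key2 := sin_sum_zero N hN0 ((p : ℤ) - q) hpmqZ
      (2 * π * ((p : ℝ) - (q : ℝ)) * τ + (φx - φy))
    calc ∑ k ∈ Finset.Icc 1 N,
          deriv (fun t : ℝ => x₀ * Real.sin (2 * π * p * (t + (k : ℝ) / N) + φx)) τ *
            (y₀ * Real.sin (2 * π * q * (τ + (k : ℝ) / N) + φy))
        = ∑ k ∈ Finset.Icc 1 N, ((x₀ * y₀ * (2 * π * p) / 2) *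
            Real.sin (2 * π * ((((p : ℤ) + q) : ℤ) : ℝ) * (k : ℝ) / (N : ℝ)
              + (2 * π * ((p : ℝ) + (q : ℝ)) * τ + (φx + φy)))
          - (x₀ * y₀ * (2 * π * p) / 2) *
            Real.sin (2 * π * ((((p : ℤ) - q) : ℤ) : ℝ) * (k : ℝ) / (N : ℝ)
              + (2 * π * ((p : ℝ) - (q : ℝ)) * τ + (φx - φy)))) := by
          refine Finset.sum_congr rfl fun k _ => ?_
          have e1 : 2 * π * ((((p : ℤ) + q) : ℤ) : ℝ) * (k : ℝ) / (N : ℝ)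
              + (2 * π * ((p : ℝ) + (q : ℝ)) * τ + (φx + φy))
              = (2 * π * p * (τ + (k : ℝ) / N) + φx)
                + (2 * π * q * (τ + (k : ℝ) / N) + φy) := by
            push_cast; field_simp; ring
          have e2 : 2 * π * ((((p : ℤ) - q) : ℤ) : ℝ) * (k : ℝ) / (N : ℝ)
              + (2 * π * ((p : ℝ) - (q : ℝ)) * τ + (φx - φy))
              = (2 * π * p * (τ + (k : ℝ) / N) + φx)
                - (2 * π * q * (τ + (k : ℝ) / N) + φy) := by
            push_cast; field_simp; ring
          rw [deriv_amp_sin, e1, e2]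
          exact lem _ _
      _ = 0 := by
          rw [Finset.sum_sub_distrib, ← Finset.mul_sum, ← Finset.mul_sum, key1, key2]
          simp
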